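/- Let $K \subseteq L \subseteq A$ be finite extensions of differential fields of characteristic zero where the derivation $D$ commutes with all field embeddings involved, and let $\mathrm{Tr}_{A/L}$ and $N_{A/L}$ denote the trace and norm maps. Then for every nonzero $b \in A$, $\mathrm{Tr}_{A/L}\left(\frac{D(b)}{b}\right) = \frac{D(N_{A/L}(b))}{N_{A/L}(b)}$. -/

import Mathlib

/-- Build a `Derivation ℤ` from additivity and the Leibniz rule. -/
private noncomputable def mkDer {R : Type*} [CommRing R] (d : R → R)
    (hadd : ∀ a b, d (a + b) = d a + d b)
    (hmul : ∀ a b, d (a * b) = a * d b + b * d a) :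
    Derivation ℤ R R where
  toLinearMap := (AddMonoidHom.mk' d hadd).toIntLinearMap
  map_one_eq_zero' := by
    have h := hmul 1 1
    simp only [mul_one, one_mul] at h
    exact (add_eq_left.mp h.symm)
  leibniz' a b := by
    show d (a * b) = a • d b + b • d a
    simp [hmul a b, smul_eq_mul]

private lemma mkDer_apply {R : Type*} [CommRing R] (d : R → R)
    (hadd : ∀ a b, d (a + b) = d a + d b)
    (hmul : ∀ a b, d (a * b) = a * d b + b * d a) (a : R) :
    mkDer d hadd hmul a = d a := rfl

private lemma der_prod {R : Type*} [CommRing R] (d : Derivation ℤ R R)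
    {ι : Type*} [DecidableEq ι] (s : Finset ι) (f : ι → R) :
    d (∏ i ∈ s, f i) = ∑ j ∈ s, (∏ i ∈ s.erase j, f i) * d (f j) := by
  induction s using Finset.induction_on with
  | empty => simp
  | insert _ _ hj ih =>
    rename_i a s
    rw [Finset.prod_insert hj, d.leibniz, smul_eq_mul, smul_eq_mul, ih, Finset.mul_sum,
      Finset.sum_insert hj, Finset.erase_insert hj, add_comm]
    congr 1
    refine Finset.sum_congr rfl fun j hjs => ?_
    rw [Finset.erase_insert_of_ne (by rintro rfl; exact hj hjs),
      Finset.prod_insert (fun h => hj (Finset.mem_of_mem_erase h)), mul_assoc]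

/-- Jacobi's formula for a derivation. -/
private lemma der_det {R ι : Type*} [CommRing R] [Fintype ι] [DecidableEq ι]
    (d : Derivation ℤ R R) (M : Matrix ι ι R) :
    d M.det = Matrix.trace (M.adjugate * M.map fun x => d x) := by
  calc d M.det
      = ∑ σ : Equiv.Perm ι, ((Equiv.Perm.sign σ : ℤ) : R) *
          ∑ j, (∏ i ∈ Finset.univ.erase j, M (σ i) i) * d (M (σ j) j) := by
        rw [Matrix.det_apply', map_sum]
        refine Finset.sum_congr rfl fun σ _ => ?_
        rw [← zsmul_eq_mul, map_zsmul, der_prod, zsmul_eq_mul]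
    _ = ∑ j, ∑ σ : Equiv.Perm ι, ((Equiv.Perm.sign σ : ℤ) : R) *
          ∏ i, (M.updateCol j fun k => d (M k j)) (σ i) i := by
        simp_rw [Finset.mul_sum]
        rw [Finset.sum_comm]
        refine Finset.sum_congr rfl fun j _ => Finset.sum_congr rfl fun σ _ => ?_
        congr 1
        rw [← Finset.mul_prod_erase Finset.univ _ (Finset.mem_univ j), mul_comm]
        congr 1
        · rw [Matrix.updateCol_apply, if_pos rfl]
        · exact Finset.prod_congr rfl fun i hi => by
            rw [Matrix.updateCol_apply, if_neg (Finset.mem_erase.mp hi).1]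
    _ = ∑ j, (M.updateCol j fun k => d (M k j)).det := by
        exact Finset.sum_congr rfl fun j _ => (Matrix.det_apply' _).symm
    _ = ∑ j, Matrix.cramer M (fun k => d (M k j)) j := by
        exact Finset.sum_congr rfl fun j _ => (Matrix.cramer_apply _ _ _).symm
    _ = Matrix.trace (M.adjugate * M.map fun x => d x) := by
        simp_rw [Matrix.cramer_eq_adjugate_mulVec]
        simp [Matrix.trace, Matrix.mulVec, Matrix.diag, Matrix.mul_apply, Matrix.map_apply,
          dotProduct]

/-- Logarithmic derivative of the norm: if `A` is a finite extension of `L`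
(characteristic zero) and `D` is a derivation on `A` mapping `L` into `L`, then for
every nonzero `b ∈ A`, `Tr_{A/L}(D(b)/b) = D(N_{A/L}(b)) / N_{A/L}(b)`. -/
theorem stmt_10 (L A : Type*) [Field L] [Field A] [CharZero L] [Algebra L A]
    [FiniteDimensional L A]
    (D : A → A)
    (hadd : ∀ a b : A, D (a + b) = D a + D b)
    (hmul : ∀ a b : A, D (a * b) = a * D b + b * D a)
    (hL : ∀ x : L, D (algebraMap L A x) ∈ Set.range (algebraMap L A))
    (b : A) (hb : b ≠ 0) :
    algebraMap L A (Algebra.trace L A (D b / b)) =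
      D (algebraMap L A (Algebra.norm L b)) /
        algebraMap L A (Algebra.norm L b) := by
  classical
  have hinj : Function.Injective (algebraMap L A) := (algebraMap L A).injective
  let dA : Derivation ℤ A A := mkDer D hadd hmul
  choose D' hD' using hL
  have hD'add : ∀ x y : L, D' (x + y) = D' x + D' y := by
    intro x y
    apply hinj
    rw [map_add, hD', hD', hD', map_add, hadd]
  have hD'mul : ∀ x y : L, D' (x * y) = x * D' y + y * D' x := by
    intro x y
    apply hinj
    rw [hD', map_mul, hmul, map_add, map_mul, map_mul, hD', hD']
  let dL : Derivation ℤ L L := mkDer D' hD'add hD'mul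
  set ι := Fin (Module.finrank L A) with hι
  let e : Module.Basis ι L A := Module.finBasis L A
  set M : Matrix ι ι L := Algebra.leftMulMatrix e b with hMdef
  set P : Matrix ι ι L := Matrix.of fun i j => e.repr (D (e j)) i with hPdef
  -- smul Leibniz rule
  have h4 : ∀ (c : L) (x : A), D (c • x) = c • D x + D' c • x := by
    intro c x
    rw [Algebra.smul_def, hmul, ← hD', Algebra.smul_def, Algebra.smul_def, mul_comm x]
  have hDsum : ∀ (f : ι → A), D (∑ k, f k) = ∑ k, D (f k) := fun f => map_sum dA f _
  -- key matrix identity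
  have key : Algebra.leftMulMatrix e (D b) = M.map D' + (P * M - M * P) := by
    ext i j
    have h2 : ∀ k, b * e k = ∑ l, M l k • e l := by
      intro k
      conv_lhs => rw [← e.sum_repr (b * e k)]
      exact Finset.sum_congr rfl fun l _ => by
        rw [hMdef, Algebra.leftMulMatrix_eq_repr_mul]
    have h3 : ∀ k, D (e k) = ∑ l, P l k • e l := by
      intro k
      conv_lhs => rw [← e.sum_repr (D (e k))]
      rfl
    have h7 : D b * e j = ∑ i, (D' (M i j) + ((P * M) i j - (M * P) i j)) • e i := by
      have h1 : D b * e j = D (b * e j) - b * D (e j) := by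
        rw [hmul]; ring
      have E1 : D (b * e j) = ∑ k, (D' (M k j) • e k + M k j • D (e k)) := by
        rw [h2 j, hDsum]
        exact Finset.sum_congr rfl fun k _ => by rw [h4]; ring
      have E2 : b * D (e j) = ∑ k, P k j • (b * e k) := by
        rw [h3 j, Finset.mul_sum]
        exact Finset.sum_congr rfl fun k _ => (mul_smul_comm _ _ _)
      rw [h1, E1, E2]
      simp_rw [h3, h2, Finset.smul_sum, smul_smul, add_smul, sub_smul, Finset.sum_add_distrib,
        Finset.sum_sub_distrib, Matrix.mul_apply, Finset.sum_smul]
      rw [Finset.sum_comm (γ := ι) (f := fun x l => (M x j * P l x) • e l),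
        Finset.sum_comm (γ := ι) (f := fun x l => (P x j * M l x) • e l)]
      rw [add_sub_assoc]
      congr 1
      congr 1
      · exact Finset.sum_congr rfl fun y _ => Finset.sum_congr rfl fun x _ => by rw [mul_comm]
      · exact Finset.sum_congr rfl fun y _ => Finset.sum_congr rfl fun x _ => by rw [mul_comm]
    rw [Algebra.leftMulMatrix_eq_repr_mul, h7, e.repr_sum_self]
    simp [Matrix.map_apply]
  set n : L := Algebra.norm L b with hn
  have hdet : M.det = n := (Algebra.norm_eq_matrix_det e b).symm
  have hn0 : n ≠ 0 := by
    rw [hn]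
    exact Algebra.norm_ne_zero_iff.mpr hb
  have hdetne : M.det ≠ 0 := by rw [hdet]; exact hn0
  have hMunit : IsUnit M.det := hdetne.isUnit
  have hTQ : Algebra.leftMulMatrix e (D b / b) * M = Algebra.leftMulMatrix e (D b) := by
    rw [hMdef, ← map_mul, div_mul_cancel₀ _ hb]
  have htr : Algebra.trace L A (D b / b) = Matrix.trace (M⁻¹ * M.map D') := by
    rw [Algebra.trace_eq_matrix_trace e]
    have hT : Algebra.leftMulMatrix e (D b / b) = Algebra.leftMulMatrix e (D b) * M⁻¹ := by
      rw [← hTQ, Matrix.mul_assoc, Matrix.mul_nonsing_inv _ hMunit, Matrix.mul_one]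
    rw [hT, key, Matrix.trace_mul_comm, Matrix.mul_add, Matrix.mul_sub, Matrix.trace_add,
      Matrix.trace_sub, ← Matrix.mul_assoc M⁻¹ M P, Matrix.nonsing_inv_mul _ hMunit,
      Matrix.one_mul, Matrix.trace_mul_comm M⁻¹ (P * M), Matrix.mul_assoc,
      Matrix.mul_nonsing_inv _ hMunit, Matrix.mul_one]
    ring
  have hadj : M.adjugate = M.det • M⁻¹ := by
    rw [Matrix.inv_def, Ring.inverse_eq_inv', smul_smul, mul_inv_cancel₀ hdetne, one_smul]
  have hjac : Matrix.trace (M⁻¹ * M.map D') = D' n / n := by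
    have h2 : D' M.det = Matrix.trace (M.adjugate * M.map fun x => D' x) := der_det dL M
    rw [hadj, Matrix.smul_mul, Matrix.trace_smul, smul_eq_mul, hdet] at h2
    rw [eq_div_iff hn0, mul_comm]
    exact h2.symm
  rw [htr, hjac, map_div₀, hD']
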